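/- Let G be a finite group and W a finite-dimensional complex vector space carrying a representation of G. Then W admits a G-invariant quaternionic structure (a conjugate-linear map Q : W → W with Q∘Q = −id_W commuting with the action of every element of G) if and only if there exists a nondegenerate G-invariant alternating ℂ-bilinear form on W. -/

import Mathlib

/-- A quaternionic structure on a complex vector space: a conjugate-linear map squaring to `−id`. -/
def IsQuaternionicStructure {W : Type*} [AddCommGroup W] [Module ℂ W] (Q : W → W) : Prop :=
  (∀ x y : W, Q (x + y) = Q x + Q y) ∧
  (∀ (a : ℂ) (x : W), Q (a • x) = (starRingEnd ℂ a) • Q x) ∧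
  (∀ x : W, Q (Q x) = -x)

open scoped ComplexConjugate InnerProductSpace

section InvInner
variable {G W : Type*} [Group G] [Fintype G] [AddCommGroup W] [Module ℂ W]
  [FiniteDimensional ℂ W]

noncomputable def baseInner (x y : W) : ℂ :=
  ∑ j, conj ((Module.finBasis ℂ W).repr x j) * ((Module.finBasis ℂ W).repr y j)

noncomputable def invInner (ρ : Representation ℂ G W) (x y : W) : ℂ :=
  ∑ s : G, baseInner (ρ s x) (ρ s y)

variable (ρ : Representation ℂ G W)

lemma invInner_conj_symm (x y : W) : conj (invInner ρ y x) = invInner ρ x y := by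
  unfold invInner baseInner
  rw [map_sum]
  refine Finset.sum_congr rfl fun s _ => ?_
  rw [map_sum]
  refine Finset.sum_congr rfl fun j _ => ?_
  simp [mul_comm]

lemma invInner_add_left (x y z : W) :
    invInner ρ (x + y) z = invInner ρ x z + invInner ρ y z := by
  unfold invInner baseInner
  rw [← Finset.sum_add_distrib]
  refine Finset.sum_congr rfl fun s _ => ?_
  rw [← Finset.sum_add_distrib]
  refine Finset.sum_congr rfl fun j _ => ?_
  simp [add_mul]

lemma invInner_smul_left (a : ℂ) (x y : W) :
    invInner ρ (a • x) y = conj a * invInner ρ x y := by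
  unfold invInner baseInner
  rw [Finset.mul_sum]
  refine Finset.sum_congr rfl fun s _ => ?_
  rw [Finset.mul_sum]
  refine Finset.sum_congr rfl fun j _ => ?_
  simp [mul_assoc]

lemma invInner_add_right (x y z : W) :
    invInner ρ x (y + z) = invInner ρ x y + invInner ρ x z := by
  rw [← invInner_conj_symm, invInner_add_left, map_add, invInner_conj_symm, invInner_conj_symm]

lemma invInner_smul_right (a : ℂ) (x y : W) :
    invInner ρ x (a • y) = a * invInner ρ x y := by
  rw [← invInner_conj_symm, invInner_smul_left, map_mul, invInner_conj_symm]
  simp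

lemma invInner_self_eq_re (x : W) :
    invInner ρ x x = ((∑ s : G, ∑ j, Complex.normSq ((Module.finBasis ℂ W).repr (ρ s x) j) : ℝ) : ℂ) := by
  unfold invInner baseInner
  push_cast
  refine Finset.sum_congr rfl fun s _ => Finset.sum_congr rfl fun j _ => ?_
  rw [Complex.normSq_eq_conj_mul_self]

lemma invInner_self_nonneg (x : W) :
    0 ≤ (invInner ρ x x).re ∧ (invInner ρ x x).im = 0 := by
  rw [invInner_self_eq_re]
  constructor
  · simp only [Complex.ofReal_re]
    exact Finset.sum_nonneg fun s _ => Finset.sum_nonneg fun j _ => Complex.normSq_nonneg _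
  · simp

lemma invInner_definite (x : W) (h : (invInner ρ x x).re = 0) : x = 0 := by
  have h2 := invInner_self_eq_re ρ x
  rw [h2] at h
  simp only [Complex.ofReal_re] at h
  have hall : ∀ s ∈ (Finset.univ : Finset G),
      ∑ j, Complex.normSq ((Module.finBasis ℂ W).repr (ρ s x) j) = 0 := by
    intro s _
    have := (Finset.sum_eq_zero_iff_of_nonneg (fun s _ =>
      Finset.sum_nonneg fun j _ => Complex.normSq_nonneg _)).mp h s (Finset.mem_univ s)
    exact this
  have h1 := hall 1 (Finset.mem_univ 1)
  have hj : ∀ j, Complex.normSq ((Module.finBasis ℂ W).repr (ρ (1:G) x) j) = 0 := by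
    intro j
    exact (Finset.sum_eq_zero_iff_of_nonneg (fun j _ => Complex.normSq_nonneg _)).mp h1 j
      (Finset.mem_univ j)
  have : (Module.finBasis ℂ W).repr (ρ (1:G) x) = 0 := by
    ext j
    simpa using Complex.normSq_eq_zero.mp (hj j)
  have hx : ρ (1:G) x = 0 := by
    have := (Module.finBasis ℂ W).repr.map_eq_zero_iff.mp this
    exact this
  simpa using hx

lemma invInner_invariant (t : G) (x y : W) :
    invInner ρ (ρ t x) (ρ t y) = invInner ρ x y := by
  unfold invInner
  refine Fintype.sum_equiv (Equiv.mulRight t) _ _ fun s => ?_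
  simp only [Equiv.coe_mulRight]
  congr 1 <;> rw [map_mul] <;> rfl

theorem forward_dir (Q : W → W) (hQ : IsQuaternionicStructure Q)
    (hcom : ∀ (s : G) (x : W), Q (ρ s x) = ρ s (Q x)) :
    ∃ B : LinearMap.BilinForm ℂ W,
      (∀ x : W, B x x = 0) ∧
      (∀ (s : G) (x y : W), B (ρ s x) (ρ s y) = B x y) ∧
      (∀ x : W, (∀ y : W, B x y = 0) → x = 0) := by
  obtain ⟨hQadd, hQsmul, hQQ⟩ := hQ
  have hQ0 : Q 0 = 0 := by
    have := hQadd 0 0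
    rw [add_zero] at this
    exact left_eq_add.mp this
  have hQneg : ∀ x : W, Q (-x) = -Q x := by
    intro x
    have h := hQadd x (-x)
    rw [add_neg_cancel, hQ0] at h
    exact eq_neg_of_add_eq_zero_right h.symm
  set h' : W → W → ℂ := fun x y => invInner ρ x y + conj (invInner ρ (Q x) (Q y)) with hh'
  have h'_add_left : ∀ x y z : W, h' (x + y) z = h' x z + h' y z := by
    intro x y z
    simp only [hh', hQadd, invInner_add_left, map_add]
    ring
  have h'_smul_left : ∀ (a : ℂ) (x y : W), h' (a • x) y = conj a * h' x y := by
    intro a x y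
    simp only [hh', hQsmul, invInner_smul_left, map_mul, Complex.conj_conj, mul_add]
  have h'_conj_symm : ∀ x y : W, conj (h' y x) = h' x y := by
    intro x y
    simp only [hh', map_add, Complex.conj_conj, invInner_conj_symm]
  have h'_add_right : ∀ x y z : W, h' x (y + z) = h' x y + h' x z := by
    intro x y z
    simp only [hh', hQadd, invInner_add_right, map_add]
    ring
  have h'_smul_right : ∀ (a : ℂ) (x y : W), h' x (a • y) = a * h' x y := by
    intro a x y
    simp only [hh', hQsmul, invInner_smul_right, map_mul, Complex.conj_conj, mul_add]
  have h'_neg_right : ∀ x y : W, h' x (-y) = -(h' x y) := by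
    intro x y
    have := h'_smul_right (-1) x y
    simpa using this
  have h'_Q : ∀ x y : W, h' (Q x) (Q y) = conj (h' x y) := by
    intro x y
    simp only [hh', hQQ, map_add, Complex.conj_conj]
    have : invInner ρ (-x) (-y) = invInner ρ x y := by
      rw [← neg_one_smul ℂ x, ← neg_one_smul ℂ y, invInner_smul_left, invInner_smul_right]
      simp
    rw [this]
    ring
  have h'_inv : ∀ (s : G) (x y : W), h' (ρ s x) (ρ s y) = h' x y := by
    intro s x y
    simp only [hh', hcom, invInner_invariant]
  refine ⟨LinearMap.mk₂ ℂ (fun x y => h' (Q x) y)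
    (fun x y z => by show h' (Q (x + y)) z = h' (Q x) z + h' (Q y) z; rw [hQadd, h'_add_left])
    (fun a x y => by
      show h' (Q (a • x)) y = a • h' (Q x) y
      rw [hQsmul, h'_smul_left, Complex.conj_conj, smul_eq_mul])
    (fun x y z => h'_add_right _ _ _)
    (fun a x y => by
      show h' (Q x) (a • y) = a • h' (Q x) y
      rw [h'_smul_right, smul_eq_mul]), ?_, ?_, ?_⟩
  · intro x
    have key : ∀ x y : W, h' (Q x) y = -(h' (Q y) x) := by
      intro x y
      have h1 : conj (h' (Q x) y) = h' y (Q x) := h'_conj_symm _ _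
      have h2 : h' (Q y) (Q (Q x)) = conj (h' y (Q x)) := h'_Q _ _
      have h3 : h' y (Q x) = conj (h' (Q y) (Q (Q x))) := by rw [h2, Complex.conj_conj]
      rw [hQQ, h'_neg_right] at h3
      apply (starRingEnd ℂ).injective
      rw [h1, h3, map_neg]
    have := key x x
    simp only [LinearMap.mk₂_apply]
    have h2 : h' (Q x) x + h' (Q x) x = 0 := by
      nth_rewrite 1 [this]
      exact neg_add_cancel _
    exact add_self_eq_zero.mp h2
  · intro s x y
    simp only [LinearMap.mk₂_apply, hcom, h'_inv]
  · intro x hx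
    simp only [LinearMap.mk₂_apply] at hx
    have h0 : h' (Q x) (Q x) = 0 := hx (Q x)
    have hre : (invInner ρ (Q x) (Q x)).re + (invInner ρ (Q (Q x)) (Q (Q x))).re = 0 := by
      have := congrArg Complex.re h0
      simpa [hh'] using this
    have hQx : Q x = 0 := by
      apply invInner_definite ρ
      have n1 := (invInner_self_nonneg ρ (Q x)).1
      have n2 := (invInner_self_nonneg ρ (Q (Q x))).1
      linarith
    have : Q (Q x) = 0 := by rw [hQx, hQ0]
    rw [hQQ] at this
    exact neg_eq_zero.mp this

end InvInner

theorem quaternionic_from_skew {W : Type*} [NormedAddCommGroup W] [InnerProductSpace ℂ W]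
    [FiniteDimensional ℂ W]
    (T : W → W)
    (hadd : ∀ x y : W, T (x + y) = T x + T y)
    (hsmul : ∀ (a : ℂ) (x : W), T (a • x) = (starRingEnd ℂ a) • T x)
    (hskew : ∀ x y : W, (⟪T x, y⟫_ℂ) = - ⟪T y, x⟫_ℂ)
    (hinj : ∀ x : W, T x = 0 → x = 0) :
    ∃ Q : W → W, IsQuaternionicStructure Q ∧
      ∀ L : W →ₗ[ℂ] W, (∀ x, L (T x) = T (L x)) → ∀ x, Q (L x) = L (Q x) := by
  classical
  -- S = T ∘ T is complex-linear
  set S : W →ₗ[ℂ] W :=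
    { toFun := fun x => T (T x)
      map_add' := fun x y => by show T (T (x+y)) = T (T x) + T (T y); rw [hadd, hadd]
      map_smul' := fun a x => by
        show T (T (a • x)) = a • T (T x)
        rw [hsmul, hsmul]
        simp } with hSdef
  have hSapp : ∀ x, S x = T (T x) := fun _ => rfl
  -- S is symmetric
  have hsym : S.IsSymmetric := by
    intro x y
    rw [hSapp, hSapp, hskew (T x) y, ← inner_conj_symm x (T (T y)), hskew (T y) x]
    rw [map_neg, inner_conj_symm]
  set n := Module.finrank ℂ W with hndef
  have hn : Module.finrank ℂ W = n := rfl
  set b := hsym.eigenvectorBasis hn with hbdef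
  set μ := hsym.eigenvalues hn with hmudef
  have hSb : ∀ i, S (b i) = (μ i : ℂ) • b i := fun i => hsym.apply_eigenvectorBasis hn i
  have hreprS : ∀ (x : W) (j : Fin n), b.repr (S x) j = (μ j : ℂ) * b.repr x j := by
    intro x j
    exact hsym.eigenvectorBasis_apply_self_apply hn x j
  -- eigenvalues are negative
  have hμneg : ∀ i, μ i < 0 := by
    intro i
    have hb1 : ⟪b i, b i⟫_ℂ = 1 := by
      rw [inner_self_eq_norm_sq_to_K]
      rw [b.orthonormal.1 i]
      norm_num
    have h1 : ⟪S (b i), b i⟫_ℂ = (μ i : ℂ) := by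
      rw [hSb, inner_smul_left, hb1]
      simp [Complex.conj_ofReal]
    have h2 : ⟪S (b i), b i⟫_ℂ = -((‖T (b i)‖ : ℂ) ^ 2) := by
      rw [hSapp, hskew (T (b i)) (b i), inner_self_eq_norm_sq_to_K]
      norm_cast
    have hTbne : T (b i) ≠ 0 := by
      intro h
      have := hinj (b i) h
      have hbne : b i ≠ 0 := by
        intro h0
        have := b.orthonormal.1 i
        rw [h0] at this
        simp at this
      exact hbne this
    have : (μ i : ℂ) = -((‖T (b i)‖ : ℂ) ^ 2) := by rw [← h1, h2]
    have hre : μ i = -(‖T (b i)‖ ^ 2) := by exact_mod_cast this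
    have hpos : 0 < ‖T (b i)‖ ^ 2 := by
      have : 0 < ‖T (b i)‖ := norm_pos_iff.mpr hTbne
      positivity
    linarith
  set g : Fin n → ℝ := fun i => (Real.sqrt (-μ i))⁻¹ with hgdef
  have hg : ∀ i, g i ^ 2 * μ i = -1 := by
    intro i
    have h1 : (0:ℝ) ≤ -μ i := by linarith [hμneg i]
    have h2 : Real.sqrt (-μ i) ^ 2 = -μ i := Real.sq_sqrt h1
    have hne : μ i ≠ 0 := ne_of_lt (hμneg i)
    rw [hgdef]
    simp only [inv_pow]
    rw [h2]
    field_simp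
  -- the scaling operator R
  set R : W → W := fun x => ∑ i, ((g i : ℂ) * b.repr x i) • b i with hRdef
  have repr_R : ∀ (x : W) (j : Fin n), b.repr (R x) j = (g j : ℂ) * b.repr x j := by
    intro x j
    rw [hRdef, OrthonormalBasis.repr_apply_apply, inner_sum]
    have : ∀ i : Fin n, ⟪b j, ((g i : ℂ) * b.repr x i) • b i⟫_ℂ
        = if i = j then (g i : ℂ) * b.repr x i else 0 := by
      intro i
      rw [inner_smul_right, orthonormal_iff_ite.mp b.orthonormal j i]
      by_cases h : i = j
      · simp [h]
      · simp [h, Ne.symm h]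
    rw [Finset.sum_congr rfl (fun i _ => this i), Finset.sum_ite_eq' Finset.univ j]
    simp
  have hext : ∀ x y : W, (∀ j, b.repr x j = b.repr y j) → x = y := by
    intro x y h
    apply b.repr.injective
    ext j
    exact h j
  have keyA : ∀ (i : Fin n) (x : W), S x = (μ i : ℂ) • x → R x = (g i : ℂ) • x := by
    intro i x hx
    apply hext
    intro j
    rw [repr_R]
    have hc : (μ j : ℂ) * b.repr x j = (μ i : ℂ) * b.repr x j := by
      rw [← hreprS, hx, map_smul]
      simp
    rw [map_smul]
    simp only [PiLp.smul_apply, smul_eq_mul]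
    by_cases hcz : b.repr x j = 0
    · rw [hcz]; ring
    · have : (μ j : ℂ) = (μ i : ℂ) := mul_right_cancel₀ hcz hc
      have hmuji : μ j = μ i := by exact_mod_cast this
      have hgji : g j = g i := by
        show (Real.sqrt (-μ j))⁻¹ = (Real.sqrt (-μ i))⁻¹
        rw [hmuji]
      rw [hgji]
  have hT0 : T 0 = 0 := by
    have := hadd 0 0
    rw [add_zero] at this
    exact left_eq_add.mp this
  have hsum : ∀ (F : W → W), (∀ x y, F (x + y) = F x + F y) → F 0 = 0 →
      ∀ (f : Fin n → W), F (∑ i, f i) = ∑ i, F (f i) := by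
    intro F haddF h0 f
    induction (Finset.univ : Finset (Fin n)) using Finset.induction_on with
    | empty => simpa using h0
    | insert _ _ hni ih => rw [Finset.sum_insert hni, haddF, ih, Finset.sum_insert hni]
  have hRadd : ∀ x y : W, R (x + y) = R x + R y := by
    intro x y
    rw [hRdef]
    simp only [map_add]
    rw [← Finset.sum_add_distrib]
    refine Finset.sum_congr rfl fun i _ => ?_
    simp only [PiLp.add_apply]
    rw [mul_add, add_smul]
  have hRsmul : ∀ (a : ℂ) (x : W), R (a • x) = a • R x := by
    intro a x
    rw [hRdef]
    simp only [map_smul]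
    rw [Finset.smul_sum]
    refine Finset.sum_congr rfl fun i _ => ?_
    simp only [PiLp.smul_apply, smul_eq_mul, smul_smul]
    ring_nf
  have hR0 : R 0 = 0 := by rw [hRdef]; simp
  have hRb : ∀ i, R (b i) = (g i : ℂ) • b i := fun i => keyA i (b i) (hSb i)
  have hTb : ∀ i, R (T (b i)) = (g i : ℂ) • T (b i) := by
    intro i
    apply keyA
    show T (T (T (b i))) = (μ i : ℂ) • T (b i)
    have h1 : T (T (T (b i))) = T (S (b i)) := rfl
    rw [h1, hSb, hsmul]
    rw [Complex.conj_ofReal]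
  have hRT : ∀ x, R (T x) = T (R x) := by
    intro x
    calc R (T x) = R (T (∑ i, b.repr x i • b i)) := by rw [b.sum_repr x]
      _ = R (∑ i, T (b.repr x i • b i)) := by rw [hsum T hadd hT0]
      _ = R (∑ i, conj (b.repr x i) • T (b i)) := by
            congr 1; exact Finset.sum_congr rfl fun i _ => by rw [hsmul]
      _ = ∑ i, R (conj (b.repr x i) • T (b i)) := hsum R hRadd hR0 _
      _ = ∑ i, (conj (b.repr x i) * (g i : ℂ)) • T (b i) := by
            refine Finset.sum_congr rfl fun i _ => ?_
            rw [hRsmul, hTb, smul_smul]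
      _ = ∑ i, T ((b.repr x i * (g i : ℂ)) • b i) := by
            refine Finset.sum_congr rfl fun i _ => ?_
            rw [hsmul, map_mul, Complex.conj_ofReal]
      _ = T (∑ i, (b.repr x i * (g i : ℂ)) • b i) := (hsum T hadd hT0 _).symm
      _ = T (∑ i, b.repr x i • R (b i)) := by
            congr 1
            refine Finset.sum_congr rfl fun i _ => ?_
            rw [hRb, smul_smul]
      _ = T (∑ i, R (b.repr x i • b i)) := by
            congr 1
            exact Finset.sum_congr rfl fun i _ => (hRsmul _ _).symm
      _ = T (R (∑ i, b.repr x i • b i)) := by rw [hsum R hRadd hR0]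
      _ = T (R x) := by rw [b.sum_repr x]
  set Q : W → W := fun x => T (R x) with hQdef
  have hQadd : ∀ x y : W, Q (x + y) = Q x + Q y := fun x y => by
    show T (R (x + y)) = T (R x) + T (R y)
    rw [hRadd, hadd]
  have hQsmul : ∀ (a : ℂ) (x : W), Q (a • x) = conj a • Q x := fun a x => by
    show T (R (a • x)) = conj a • T (R x)
    rw [hRsmul, hsmul]
  have hQQ : ∀ x : W, Q (Q x) = -x := by
    intro x
    show T (R (T (R x))) = -x
    rw [hRT (R x)]
    have h1 : T (T (R (R x))) = S (R (R x)) := rfl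
    rw [h1]
    apply hext
    intro j
    rw [hreprS, repr_R, repr_R, map_neg]
    have hgc : (g j : ℂ) ^ 2 * (μ j : ℂ) = -1 := by exact_mod_cast hg j
    simp only [PiLp.neg_apply]
    linear_combination (b.repr x j) * hgc
  refine ⟨Q, ⟨hQadd, hQsmul, hQQ⟩, ?_⟩
  intro L hLT x
  have hLS : ∀ y, S (L y) = L (S y) := fun y => by
    rw [hSapp, hSapp, ← hLT, ← hLT]
  have hLb : ∀ i, R (L (b i)) = (g i : ℂ) • L (b i) := by
    intro i
    apply keyA
    rw [hLS, hSb, map_smul]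
  have hL0 : L 0 = 0 := map_zero L
  have hRL : ∀ y, R (L y) = L (R y) := by
    intro y
    calc R (L y) = R (L (∑ i, b.repr y i • b i)) := by rw [b.sum_repr y]
      _ = R (∑ i, b.repr y i • L (b i)) := by rw [map_sum]; simp_rw [map_smul]
      _ = ∑ i, R (b.repr y i • L (b i)) := hsum R hRadd hR0 _
      _ = ∑ i, b.repr y i • ((g i : ℂ) • L (b i)) := by
            refine Finset.sum_congr rfl fun i _ => ?_
            rw [hRsmul, hLb]
      _ = ∑ i, L (b.repr y i • R (b i)) := by
            refine Finset.sum_congr rfl fun i _ => ?_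
            rw [hRb, map_smul, map_smul]
      _ = L (∑ i, b.repr y i • R (b i)) := by rw [map_sum]
      _ = L (∑ i, R (b.repr y i • b i)) := by
            congr 1
            exact Finset.sum_congr rfl fun i _ => (hRsmul _ _).symm
      _ = L (R (∑ i, b.repr y i • b i)) := by rw [hsum R hRadd hR0]
      _ = L (R y) := by rw [b.sum_repr y]
  show T (R (L x)) = L (T (R x))
  rw [hRL x, ← hLT]


/-- A finite-dimensional complex representation of a finite group `G` admits a
`G`-invariant quaternionic structure iff it admits a nondegenerate `G`-invariant alternating
bilinear form. -/
theorem invariant_quaternionic_structure_iff_nondeg_invariant_alt_form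
    {G : Type*} [Group G] [Finite G]
    {W : Type*} [AddCommGroup W] [Module ℂ W] [FiniteDimensional ℂ W]
    (ρ : Representation ℂ G W) :
    (∃ Q : W → W, IsQuaternionicStructure Q ∧ ∀ (s : G) (x : W), Q (ρ s x) = ρ s (Q x)) ↔
      (∃ B : LinearMap.BilinForm ℂ W,
        (∀ x : W, B x x = 0) ∧
        (∀ (s : G) (x y : W), B (ρ s x) (ρ s y) = B x y) ∧
        (∀ x : W, (∀ y : W, B x y = 0) → x = 0)) := by
  letI : Fintype G := Fintype.ofFinite G
  constructor
  · rintro ⟨Q, hQ, hcom⟩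
    exact forward_dir ρ Q hQ hcom
  · rintro ⟨B, halt, hinv, hnd⟩
    letI c : InnerProductSpace.Core ℂ W :=
      { inner := invInner ρ
        conj_inner_symm := invInner_conj_symm ρ
        re_inner_nonneg := fun x => by
          rw [RCLike.re_to_complex]
          exact (invInner_self_nonneg ρ x).1
        add_left := invInner_add_left ρ
        smul_left := fun x y r => invInner_smul_left ρ r x y
        definite := fun x h => invInner_definite ρ x (by
          have h' : invInner ρ x x = 0 := h
          rw [h']
          simp) }
    letI : NormedAddCommGroup W := c.toNormedAddCommGroup
    letI : InnerProductSpace ℂ W := InnerProductSpace.ofCore c.toCore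
    have hinner : ∀ x y : W, (⟪x, y⟫_ℂ) = invInner ρ x y := fun x y => rfl
    have hinnerinv : ∀ (s : G) (x y : W), ⟪ρ s x, ρ s y⟫_ℂ = ⟪x, y⟫_ℂ := by
      intro s x y
      rw [hinner, hinner]
      exact invInner_invariant ρ s x y
    have hρinv : ∀ (s : G) (v : W), ρ s (ρ s⁻¹ v) = v := by
      intro s v
      have : ρ s * ρ s⁻¹ = 1 := by rw [← map_mul, mul_inv_cancel, map_one]
      calc ρ s (ρ s⁻¹ v) = (ρ s * ρ s⁻¹) v := rfl
        _ = v := by rw [this]; rfl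
    set T : W → W := fun x =>
      (InnerProductSpace.toDual ℂ W).symm (LinearMap.toContinuousLinearMap (B x)) with hTdef
    have hTip : ∀ x y : W, ⟪T x, y⟫_ℂ = B x y := by
      intro x y
      rw [hTdef]
      rw [InnerProductSpace.toDual_symm_apply]
      simp
    have hBskew : ∀ x y : W, B x y = -(B y x) := by
      intro x y
      have h0 : B (x + y) (x + y) = 0 := halt _
      simp only [map_add, LinearMap.add_apply, halt] at h0
      linear_combination h0
    have hadd : ∀ x y : W, T (x + y) = T x + T y := by
      intro x y
      apply ext_inner_right ℂ
      intro v
      rw [inner_add_left, hTip, hTip, hTip, map_add, LinearMap.add_apply]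
    have hsmul : ∀ (a : ℂ) (x : W), T (a • x) = (starRingEnd ℂ a) • T x := by
      intro a x
      apply ext_inner_right ℂ
      intro v
      rw [inner_smul_left, hTip, hTip, map_smul, Complex.conj_conj]
      rfl
    have hskew : ∀ x y : W, ⟪T x, y⟫_ℂ = -⟪T y, x⟫_ℂ := by
      intro x y
      rw [hTip, hTip, hBskew x y]
    have hinj : ∀ x : W, T x = 0 → x = 0 := by
      intro x hx
      apply hnd
      intro y
      rw [← hTip, hx, inner_zero_left]
    have hTcom : ∀ (s : G) (x : W), (ρ s) (T x) = T ((ρ s) x) := by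
      intro s x
      apply ext_inner_right ℂ
      intro v
      rw [hTip]
      conv_lhs => rw [← hρinv s v]
      rw [hinnerinv, hTip]
      conv_rhs => rw [← hρinv s v]
      rw [hinv]
    obtain ⟨Q, hQ, hcomQ⟩ := quaternionic_from_skew T hadd hsmul hskew hinj
    exact ⟨Q, hQ, fun s x => hcomQ (ρ s) (fun y => hTcom s y) x⟩
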